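/- Let n ≥ 3 be an integer. The set of real solutions (x₀, x₁, c) of the Einstein system for C(n) with x₀ ≠ 0 and x₁ ≠ 0 is exactly the two-element set consisting of (1, 1, −1/4) and ((4n³ − 20n² + 33n − 16)/(4n³ − 16n² + 23n − 12), (2n² − 3n)/(2n² − 5n + 4), (−4n³ + 20n² − 33n + 16)/(4(4n³ − 16n² + 23n − 12))). -/

import Mathlib

/-- For n ≥ 3, the real solutions (x₀, x₁, c) of the Einstein system for C(n)
with x₀ ≠ 0 and x₁ ≠ 0 are exactly the two (distinct) stated triples. -/
theorem einstein_Cn_solutions (n : ℕ) (hn : 3 ≤ n) :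
    ((1, 1, -1/4) : ℝ × ℝ × ℝ) ≠
      ((4 * (n : ℝ)^3 - 20 * (n : ℝ)^2 + 33 * (n : ℝ) - 16)
          / (4 * (n : ℝ)^3 - 16 * (n : ℝ)^2 + 23 * (n : ℝ) - 12),
       (2 * (n : ℝ)^2 - 3 * (n : ℝ)) / (2 * (n : ℝ)^2 - 5 * (n : ℝ) + 4),
       (-4 * (n : ℝ)^3 + 20 * (n : ℝ)^2 - 33 * (n : ℝ) + 16)
          / (4 * (4 * (n : ℝ)^3 - 16 * (n : ℝ)^2 + 23 * (n : ℝ) - 12))) ∧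
    ∀ x₀ x₁ c : ℝ,
      (x₀ ≠ 0 ∧ x₁ ≠ 0 ∧
        c = -x₀ / 4 ∧
        (1/4) * ((1 / (n : ℝ)) * x₁^2 - 1) = c * (1 - 1 / (n : ℝ)) * x₁ ∧
        -x₀ / (4 * ((n : ℝ) - 1)) + ((2 * (n : ℝ) - 1) / (4 * ((n : ℝ) - 1))) * x₁
          = 2 * c + 1)
      ↔ ((x₀, x₁, c) = (1, 1, -1/4) ∨
         (x₀, x₁, c) =
          ((4 * (n : ℝ)^3 - 20 * (n : ℝ)^2 + 33 * (n : ℝ) - 16)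
              / (4 * (n : ℝ)^3 - 16 * (n : ℝ)^2 + 23 * (n : ℝ) - 12),
           (2 * (n : ℝ)^2 - 3 * (n : ℝ)) / (2 * (n : ℝ)^2 - 5 * (n : ℝ) + 4),
           (-4 * (n : ℝ)^3 + 20 * (n : ℝ)^2 - 33 * (n : ℝ) + 16)
              / (4 * (4 * (n : ℝ)^3 - 16 * (n : ℝ)^2 + 23 * (n : ℝ) - 12)))) := by
  have hN : (3:ℝ) ≤ (n:ℝ) := by exact_mod_cast hn
  set N := (n:ℝ) with hNdef
  have h23 : (0:ℝ) < 2*N - 3 := by linarith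
  have hD2 : (0:ℝ) < 2*N^2 - 5*N + 4 := by nlinarith
  have hD1 : (0:ℝ) < 4*N^3 - 16*N^2 + 23*N - 12 := by nlinarith
  have hNpos : (0:ℝ) < N := by linarith
  have hN1 : (0:ℝ) < N - 1 := by linarith
  have hNne : N ≠ 0 := ne_of_gt hNpos
  have hN1ne : N - 1 ≠ 0 := ne_of_gt hN1
  have hD1ne : 4*N^3 - 16*N^2 + 23*N - 12 ≠ 0 := ne_of_gt hD1
  have hD2ne : 2*N^2 - 5*N + 4 ≠ 0 := ne_of_gt hD2
  constructor
  · intro h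
    have h2 := congrArg (fun p : ℝ × ℝ × ℝ => p.2.1) h
    simp only at h2
    rw [eq_div_iff hD2ne] at h2
    nlinarith [h2]
  · intro x₀ x₁ c
    constructor
    · rintro ⟨hx0, hx1, hc, he2, he3⟩
      rw [hc] at he2 he3
      have hx0e : (2*N-3)*x₀ = 4*(N-1) - (2*N-1)*x₁ := by
        field_simp at he3
        have key : (4*(N-1)) * ((2*N-3)*x₀) = (4*(N-1)) * (4*(N-1) - (2*N-1)*x₁) := by
          linear_combination (4*(N-1)) * he3
        exact mul_left_cancel₀ (by positivity) key
      have he2' : x₁^2 - N = -x₀ * (N-1) * x₁ := by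
        field_simp at he2
        linear_combination he2
      have hq : (2*N^2-5*N+4)*x₁^2 - 4*(N-1)^2*x₁ + N*(2*N-3) = 0 := by
        linear_combination (-(2*N-3))*he2' + ((N-1)*x₁)*hx0e
      have hfac : (x₁ - 1) * ((2*N^2-5*N+4)*x₁ - (2*N^2-3*N)) = 0 := by
        linear_combination hq
      rcases mul_eq_zero.mp hfac with h | h
      · left
        have hx1v : x₁ = 1 := by linarith
        have hx0v : x₀ = 1 :=
          mul_left_cancel₀ (ne_of_gt h23) (by linear_combination hx0e - (2*N-1)*h)
        have hcv : c = -1/4 := by rw [hc, hx0v]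
        simp [hx0v, hx1v, hcv]
      · right
        have hx1v : x₁ = (2*N^2 - 3*N) / (2*N^2 - 5*N + 4) := by
          rw [eq_div_iff hD2ne]
          linear_combination h
        have hx0v : x₀ = (4*N^3 - 20*N^2 + 33*N - 16) / (4*N^3 - 16*N^2 + 23*N - 12) := by
          rw [eq_div_iff hD1ne]
          linear_combination (2*N^2-5*N+4)*hx0e - (2*N-1)*h
        have hcv : c = (-4*N^3 + 20*N^2 - 33*N + 16) / (4*(4*N^3 - 16*N^2 + 23*N - 12)) := by
          rw [hc, hx0v]
          first
          | (field_simp; ring)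
          | field_simp
        simp [hx0v, hx1v, hcv]
    · rintro (h | h) <;>
        obtain ⟨h0, h1, h2⟩ : _ ∧ _ ∧ _ := by simpa [Prod.ext_iff] using h
      · subst h0 h1 h2
        refine ⟨one_ne_zero, one_ne_zero, by norm_num, ?_, ?_⟩
        · first
          | (field_simp; ring)
          | field_simp
        · first
          | (field_simp; ring)
          | field_simp
      · subst h0 h1 h2
        refine ⟨?_, ?_, ?_, ?_, ?_⟩
        · exact div_ne_zero (by nlinarith) hD1ne
        · exact div_ne_zero (by nlinarith) hD2ne
        · first
          | (field_simp; ring)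
          | field_simp
        · have e1 : N * (N * 2 - 5) + 4 ≠ 0 := by intro h; apply hD2ne; linear_combination h
          have e2 : N * (N * (4 * N - 16) + 23) - 12 ≠ 0 := by intro h; apply hD1ne; linear_combination h
          first
          | (field_simp; ring)
          | field_simp
        · have e1 : N * (N * 2 - 5) + 4 ≠ 0 := by intro h; apply hD2ne; linear_combination h
          have e2 : N * (N * (4 * N - 16) + 23) - 12 ≠ 0 := by intro h; apply hD1ne; linear_combination h
          first
          | (field_simp; ring)
          | field_simp
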